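/- arXiv:2507.04386 — 3 statements merged into one kernel-verified Lean document; each statement's English description precedes it below -/
import Mathlib

section
/- Let I = {i ∈ ℤ : i ≡ ε mod 2, -2m < i < 2m} and let δ = (δ_i)_{i ∈ I} with δ_{-i} = δ_i. There is a bijection Θ between the set of symmetric I-tableaux T = (c_{i,j})_{i ≥ j} (with c_{-j,-i} = c_{i,j}) of dimension vector δ (meaning Σ_{u ≥ i ≥ v} c_{u,v} = δ_i for all i) and the set of symmetric I-tableaux R = (r_{i,j})_{i ≥ j} satisfying r_{i,i} = δ_i and r_{i,j} - r_{i+2,j} - r_{i,j-2} + r_{i+2,j-2} ≥ 0 for all i ≥ j (with r_{i,j} = 0 when i ∉ I or j ∉ I), given by Θ(T)_{i,j} = Σ_{u ≥ i, j ≥ v} c_{u,v}; its inverse is c_{i,j} = r_{i,j} - r_{i+2,j} - r_{i,j-2} + r_{i+2,j-2}. -/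
/-- The index set `I = {i ∈ ℤ : i ≡ ε (mod 2), -2m < i < 2m}`. -/
noncomputable def Iset (m : ℕ) (ε : ℤ) : Finset ℤ :=
  (Finset.Ioo (-(2 * (m : ℤ))) (2 * (m : ℤ))).filter (fun i => i % 2 = ε)

/-- The box multiplicity function: `μ(i,j) = μmax` if `i + j = 0`, and `0` otherwise. -/
def boxMul (μmax : ℕ) (i j : ℤ) : ℕ := if i + j = 0 then μmax else 0

/-- The set of `I`-boxes `b(i,j,k)` with `i,j ∈ I`, `i ≥ j`, `0 ≤ k ≤ μ(i,j)`. -/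
noncomputable def Boxes (m : ℕ) (ε : ℤ) (μmax : ℕ) : Finset (ℤ × ℤ × ℕ) :=
  ((Iset m ε) ×ˢ (Iset m ε) ×ˢ Finset.range (μmax + 1)).filter
    (fun b => b.2.1 ≤ b.1 ∧ b.2.2 ≤ boxMul μmax b.1 b.2.1)

/-- The involution `τ` on `I`-boxes: `τ(b(i,j,k)) = b(-j,-i,k)` when `i + j ≠ 0`,
and `τ(b(i,-i,k)) = b(i,-i,μmax - k)` on the principal diagonal. -/
def boxτ (μmax : ℕ) (b : ℤ × ℤ × ℕ) : ℤ × ℤ × ℕ :=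
  if b.1 + b.2.1 = 0 then (b.1, b.2.1, μmax - b.2.2) else (-b.2.1, -b.1, b.2.2)

/-- The support of the box `b(i,j,k)`: `{i' ∈ I : j ≤ i' ≤ i}`. -/
noncomputable def Supp (m : ℕ) (ε : ℤ) (i j : ℤ) : Finset ℤ :=
  (Iset m ε).filter (fun x => j ≤ x ∧ x ≤ i)

/-- `h_{i'}(b) = #{j'' ∈ I : j ≤ j'' ≤ i'} - #{i'' ∈ I : i' ≤ i'' ≤ i}`. -/
noncomputable def hcoef (m : ℕ) (ε : ℤ) (i j i' : ℤ) : ℤ :=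
  (((Iset m ε).filter (fun x => j ≤ x ∧ x ≤ i')).card : ℤ) -
    (((Iset m ε).filter (fun x => i' ≤ x ∧ x ≤ i)).card : ℤ)

/-- `f_{i'}(b) = #{(i'',j'') ∈ I×I : i'' ≥ j'', i' ≤ i'' ≤ i, j < j'' ≤ i'}`. -/
noncomputable def fcoef (m : ℕ) (ε : ℤ) (i j i' : ℤ) : ℤ :=
  ((((Iset m ε) ×ˢ (Iset m ε)).filter
    (fun p => p.2 ≤ p.1 ∧ i' ≤ p.1 ∧ p.1 ≤ i ∧ j < p.2 ∧ p.2 ≤ i')).card : ℤ)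

/-- The dimension vector of a function `c` on boxes: `δ_i(c) = Σ_{b ∈ B, i ∈ Supp(b)} c(b)`. -/
noncomputable def dimvec (m : ℕ) (ε : ℤ) (μmax : ℕ) (c : ℤ × ℤ × ℕ → ℕ) (i : ℤ) : ℕ :=
  ∑ b ∈ (Boxes m ε μmax).filter (fun b => i ∈ Supp m ε b.1 b.2.1), c b

/-- The top half of the support of the box `b(i,j,k)`:
`{i' ∈ I : (i+j+2)/2 ≤ i' ≤ i}`. -/
noncomputable def SuppTop (m : ℕ) (ε : ℤ) (i j : ℤ) : Finset ℤ :=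
  (Iset m ε).filter (fun x => (i + j + 2) / 2 ≤ x ∧ x ≤ i)

/-- The rank map `Θ`: `Θ(c)_{i,j} = Σ_{u ≥ i, j ≥ v, u,v ∈ I} c_{u,v}`,
defined to be `0` outside the domain `{(i,j) : i,j ∈ I, i ≥ j}`. -/
noncomputable def Theta (m : ℕ) (ε : ℤ) (c : ℤ × ℤ → ℕ) : ℤ × ℤ → ℕ :=
  fun p =>
    if p.1 ∈ Iset m ε ∧ p.2 ∈ Iset m ε ∧ p.2 ≤ p.1 then
      ∑ q ∈ ((Iset m ε) ×ˢ (Iset m ε)).filter (fun q => p.1 ≤ q.1 ∧ q.2 ≤ p.2), c q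
    else 0

/-- The set of symmetric `I`-tableaux `(c_{i,j})_{i ≥ j}` (encoded as functions on `ℤ × ℤ`
vanishing outside the domain) with `c_{-j,-i} = c_{i,j}` and dimension vector `δ`,
i.e. `Σ_{u ≥ i ≥ v} c_{u,v} = δ_i` for all `i ∈ I`. -/
def TabSet (m : ℕ) (ε : ℤ) (δ : ℤ → ℕ) : Set (ℤ × ℤ → ℕ) :=
  {c | (∀ p : ℤ × ℤ, ¬(p.1 ∈ Iset m ε ∧ p.2 ∈ Iset m ε ∧ p.2 ≤ p.1) → c p = 0) ∧
       (∀ i j : ℤ, i ∈ Iset m ε → j ∈ Iset m ε → j ≤ i → c (-j, -i) = c (i, j)) ∧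
       (∀ i ∈ Iset m ε,
         ∑ q ∈ ((Iset m ε) ×ˢ (Iset m ε)).filter (fun q => i ≤ q.1 ∧ q.2 ≤ i), c q = δ i)}

/-- The set of symmetric `I`-tableaux `(r_{i,j})_{i ≥ j}` with `r_{i,i} = δ_i` and
`r_{i,j} - r_{i+2,j} - r_{i,j-2} + r_{i+2,j-2} ≥ 0`, with the convention `r_{i,j} = 0`
when `i ∉ I` or `j ∉ I` (built into the encoding as functions vanishing outside the domain). -/
def RSet (m : ℕ) (ε : ℤ) (δ : ℤ → ℕ) : Set (ℤ × ℤ → ℕ) :=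
  {r | (∀ p : ℤ × ℤ, ¬(p.1 ∈ Iset m ε ∧ p.2 ∈ Iset m ε ∧ p.2 ≤ p.1) → r p = 0) ∧
       (∀ i j : ℤ, i ∈ Iset m ε → j ∈ Iset m ε → j ≤ i → r (-j, -i) = r (i, j)) ∧
       (∀ i ∈ Iset m ε, r (i, i) = δ i) ∧
       (∀ i j : ℤ, i ∈ Iset m ε → j ∈ Iset m ε → j ≤ i →
         (r (i + 2, j) : ℤ) + (r (i, j - 2) : ℤ) ≤ (r (i, j) : ℤ) + (r (i + 2, j - 2) : ℤ))}

lemma mem_Iset {m : ℕ} {ε x : ℤ} :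
    x ∈ Iset m ε ↔ (-(2 * (m : ℤ)) < x ∧ x < 2 * m ∧ x % 2 = ε) := by
  simp [Iset, Finset.mem_filter, Finset.mem_Ioo, and_assoc]

/-- L1: split off the column u = i. -/
lemma theta_split (m : ℕ) (ε : ℤ) (c : ℤ × ℤ → ℕ) {i j : ℤ}
    (hi : i ∈ Iset m ε) (hj : j ∈ Iset m ε) (hji : j ≤ i) :
    Theta m ε c (i, j)
      = (∑ v ∈ (Iset m ε).filter (fun v => v ≤ j), c (i, v)) + Theta m ε c (i + 2, j) := by
  have h1 : Theta m ε c (i, j)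
      = ∑ q ∈ ((Iset m ε) ×ˢ (Iset m ε)).filter (fun q => i ≤ q.1 ∧ q.2 ≤ j), c q := by
    simp [Theta, hi, hj, hji]
  rw [h1, ← Finset.sum_filter_add_sum_filter_not _ (fun q => q.1 = i)]
  congr 1
  · -- column sum
    rw [Finset.filter_filter]
    have hset : ((Iset m ε) ×ˢ (Iset m ε)).filter (fun q => (i ≤ q.1 ∧ q.2 ≤ j) ∧ q.1 = i)
        = {i} ×ˢ ((Iset m ε).filter (fun v => v ≤ j)) := by
      ext ⟨a, b⟩
      simp only [Finset.mem_filter, Finset.mem_product, Finset.mem_singleton]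
      constructor
      · rintro ⟨⟨ha, hb⟩, ⟨-, h2⟩, h3⟩; exact ⟨h3, hb, h2⟩
      · rintro ⟨h3, hb, h2⟩; subst h3; exact ⟨⟨hi, hb⟩, ⟨le_refl _, h2⟩, rfl⟩
    rw [hset, Finset.sum_product, Finset.sum_singleton]
  · -- rest
    rw [Finset.filter_filter]
    by_cases h2 : i + 2 ∈ Iset m ε
    · have h3 : Theta m ε c (i + 2, j)
          = ∑ q ∈ ((Iset m ε) ×ˢ (Iset m ε)).filter (fun q => i + 2 ≤ q.1 ∧ q.2 ≤ j), c q := by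
        simp [Theta, h2, hj]; intro h; omega
      rw [h3]
      apply Finset.sum_congr _ (fun _ _ => rfl)
      apply Finset.filter_congr
      rintro ⟨a, b⟩ hab
      simp only [Finset.mem_product] at hab
      have := mem_Iset.mp hab.1
      have := mem_Iset.mp hi
      constructor
      · rintro ⟨⟨h4, h5⟩, h6⟩; exact ⟨by omega, h5⟩
      · rintro ⟨h4, h5⟩; exact ⟨⟨by omega, h5⟩, by omega⟩
    · have h3 : Theta m ε c (i + 2, j) = 0 := by
        simp [Theta]; intro h; exact absurd h h2
      rw [h3]
      apply Finset.sum_eq_zero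
      rintro ⟨a, b⟩ hab
      exfalso
      simp only [Finset.mem_filter, Finset.mem_product] at hab
      obtain ⟨⟨ha, hb⟩, ⟨h4, h5⟩, h6⟩ := hab
      have h7 := mem_Iset.mp ha
      have h8 := mem_Iset.mp hi
      have h9 : ¬(-(2 * (m : ℤ)) < i + 2 ∧ i + 2 < 2 * m ∧ (i + 2) % 2 = ε) :=
        fun h => h2 (mem_Iset.mpr h)
      omega

/-- L2: split off the term v = j from a column sum. -/
lemma colsum_split (m : ℕ) (ε : ℤ) (c : ℤ × ℤ → ℕ) {i j : ℤ}
    (hj : j ∈ Iset m ε) :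
    (∑ v ∈ (Iset m ε).filter (fun v => v ≤ j), c (i, v))
      = c (i, j) + ∑ v ∈ (Iset m ε).filter (fun v => v ≤ j - 2), c (i, v) := by
  rw [← Finset.sum_filter_add_sum_filter_not _ (fun v => v = j)]
  congr 1
  · rw [Finset.filter_filter]
    have : (Iset m ε).filter (fun v => v ≤ j ∧ v = j) = {j} := by
      ext a
      simp only [Finset.mem_filter, Finset.mem_singleton]
      constructor
      · rintro ⟨-, -, h⟩; exact h
      · rintro rfl; exact ⟨hj, le_refl _, rfl⟩
    rw [this, Finset.sum_singleton]
  · rw [Finset.filter_filter]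
    apply Finset.sum_congr _ (fun _ _ => rfl)
    apply Finset.filter_congr
    intro a ha
    have h1 := mem_Iset.mp ha
    have h2 := mem_Iset.mp hj
    constructor
    · rintro ⟨h3, h4⟩; omega
    · intro h3; omega

/-- L3: variant of L1 at (i, j-2). -/
lemma theta_split' (m : ℕ) (ε : ℤ) (c : ℤ × ℤ → ℕ) {i j : ℤ}
    (hi : i ∈ Iset m ε) (hj : j ∈ Iset m ε) (hji : j ≤ i) :
    Theta m ε c (i, j - 2)
      = (∑ v ∈ (Iset m ε).filter (fun v => v ≤ j - 2), c (i, v)) + Theta m ε c (i + 2, j - 2) := by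
  by_cases h2 : j - 2 ∈ Iset m ε
  · exact theta_split m ε c hi h2 (by omega)
  · have e1 : Theta m ε c (i, j - 2) = 0 := by
      simp only [Theta]; rw [if_neg]; rintro ⟨-, h, -⟩; exact h2 h
    have e2 : Theta m ε c (i + 2, j - 2) = 0 := by
      simp only [Theta]; rw [if_neg]; rintro ⟨-, h, -⟩; exact h2 h
    have e3 : (Iset m ε).filter (fun v => v ≤ j - 2) = ∅ := by
      ext a
      simp only [Finset.mem_filter, Finset.notMem_empty, iff_false, not_and]
      intro ha
      have h1 := mem_Iset.mp ha
      have h3 := mem_Iset.mp hj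
      have h4 : ¬(-(2 * (m : ℤ)) < j - 2 ∧ j - 2 < 2 * m ∧ (j - 2) % 2 = ε) :=
        fun h => h2 (mem_Iset.mpr h)
      omega
    rw [e1, e2, e3, Finset.sum_empty]

/-- Key identity. -/
lemma key_identity (m : ℕ) (ε : ℤ) (c : ℤ × ℤ → ℕ) {i j : ℤ}
    (hi : i ∈ Iset m ε) (hj : j ∈ Iset m ε) (hji : j ≤ i) :
    Theta m ε c (i, j) + Theta m ε c (i + 2, j - 2)
      = c (i, j) + Theta m ε c (i + 2, j) + Theta m ε c (i, j - 2) := by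
  rw [theta_split m ε c hi hj hji, theta_split' m ε c hi hj hji,
    colsum_split m ε c hj]
  omega

lemma neg_mem_Iset {m : ℕ} {ε x : ℤ} (h : x ∈ Iset m ε) : -x ∈ Iset m ε := by
  rw [mem_Iset] at h ⊢; omega

lemma theta_zero (m : ℕ) (ε : ℤ) (c : ℤ × ℤ → ℕ) {p : ℤ × ℤ}
    (h : ¬(p.1 ∈ Iset m ε ∧ p.2 ∈ Iset m ε ∧ p.2 ≤ p.1)) : Theta m ε c p = 0 := by
  simp only [Theta]; rw [if_neg h]

lemma theta_sym (m : ℕ) (ε : ℤ) (c : ℤ × ℤ → ℕ)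
    (hvan : ∀ p : ℤ × ℤ, ¬(p.1 ∈ Iset m ε ∧ p.2 ∈ Iset m ε ∧ p.2 ≤ p.1) → c p = 0)
    (hsym : ∀ i j : ℤ, i ∈ Iset m ε → j ∈ Iset m ε → j ≤ i → c (-j, -i) = c (i, j))
    {i j : ℤ} (hi : i ∈ Iset m ε) (hj : j ∈ Iset m ε) (hji : j ≤ i) :
    Theta m ε c (-j, -i) = Theta m ε c (i, j) := by
  have csym : ∀ u v : ℤ, c (-v, -u) = c (u, v) := by
    intro u v
    by_cases h : u ∈ Iset m ε ∧ v ∈ Iset m ε ∧ v ≤ u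
    · exact hsym u v h.1 h.2.1 h.2.2
    · rw [hvan (u, v) h, hvan (-v, -u)]
      rintro ⟨h1, h2, h3⟩
      exact h ⟨neg_neg u ▸ neg_mem_Iset h2, neg_neg v ▸ neg_mem_Iset h1, by omega⟩
  have h1 : Theta m ε c (-j, -i)
      = ∑ q ∈ ((Iset m ε) ×ˢ (Iset m ε)).filter (fun q => -j ≤ q.1 ∧ q.2 ≤ -i), c q := by
    simp only [Theta]; rw [if_pos ⟨neg_mem_Iset hj, neg_mem_Iset hi, by omega⟩]
  have h2 : Theta m ε c (i, j)
      = ∑ q ∈ ((Iset m ε) ×ˢ (Iset m ε)).filter (fun q => i ≤ q.1 ∧ q.2 ≤ j), c q := by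
    simp only [Theta]; rw [if_pos ⟨hi, hj, hji⟩]
  rw [h1, h2]
  apply Finset.sum_nbij' (i := fun q => (-q.2, -q.1)) (j := fun q => (-q.2, -q.1))
  · rintro ⟨a, b⟩ hab
    simp only [Finset.mem_filter, Finset.mem_product] at hab ⊢
    exact ⟨⟨neg_mem_Iset hab.1.2, neg_mem_Iset hab.1.1⟩, by omega, by omega⟩
  · rintro ⟨a, b⟩ hab
    simp only [Finset.mem_filter, Finset.mem_product] at hab ⊢
    exact ⟨⟨neg_mem_Iset hab.1.2, neg_mem_Iset hab.1.1⟩, by omega, by omega⟩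
  · rintro ⟨a, b⟩ _; simp
  · rintro ⟨a, b⟩ _; simp
  · rintro ⟨a, b⟩ _; exact (csym a b).symm

/-- The inverse map. -/
noncomputable def invTab (m : ℕ) (ε : ℤ) (r : ℤ × ℤ → ℕ) : ℤ × ℤ → ℕ :=
  fun p =>
    if p.1 ∈ Iset m ε ∧ p.2 ∈ Iset m ε ∧ p.2 ≤ p.1 then
      ((r p : ℤ) - r (p.1 + 2, p.2) - r (p.1, p.2 - 2) + r (p.1 + 2, p.2 - 2)).toNat
    else 0

lemma invTab_val (m : ℕ) (ε : ℤ) (r : ℤ × ℤ → ℕ)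
    (hpos : ∀ i j : ℤ, i ∈ Iset m ε → j ∈ Iset m ε → j ≤ i →
      (r (i + 2, j) : ℤ) + (r (i, j - 2) : ℤ) ≤ (r (i, j) : ℤ) + (r (i + 2, j - 2) : ℤ))
    {i j : ℤ} (hi : i ∈ Iset m ε) (hj : j ∈ Iset m ε) (hji : j ≤ i) :
    (invTab m ε r (i, j) : ℤ)
      = (r (i, j) : ℤ) - r (i + 2, j) - r (i, j - 2) + r (i + 2, j - 2) := by
  simp only [invTab]
  rw [if_pos ⟨hi, hj, hji⟩]
  have := hpos i j hi hj hji
  rw [Int.toNat_of_nonneg (by omega)]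

lemma theta_invTab (m : ℕ) (ε : ℤ) (r : ℤ × ℤ → ℕ)
    (hvan : ∀ p : ℤ × ℤ, ¬(p.1 ∈ Iset m ε ∧ p.2 ∈ Iset m ε ∧ p.2 ≤ p.1) → r p = 0)
    (hpos : ∀ i j : ℤ, i ∈ Iset m ε → j ∈ Iset m ε → j ≤ i →
      (r (i + 2, j) : ℤ) + (r (i, j - 2) : ℤ) ≤ (r (i, j) : ℤ) + (r (i + 2, j - 2) : ℤ)) :
    ∀ p : ℤ × ℤ, Theta m ε (invTab m ε r) p = r p := by
  set c := invTab m ε r with hc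
  have main : ∀ n : ℕ, ∀ i j : ℤ, i ∈ Iset m ε → j ∈ Iset m ε → j ≤ i →
      (4 * (m : ℤ) - i + j).toNat ≤ n → Theta m ε c (i, j) = r (i, j) := by
    intro n
    induction n with
    | zero =>
      intro i j hi hj hji hn
      exfalso
      have := mem_Iset.mp hi; have := mem_Iset.mp hj
      omega
    | succ n ih =>
      intro i j hi hj hji hn
      have hi' := mem_Iset.mp hi
      have hj' := mem_Iset.mp hj
      have KI := key_identity m ε c hi hj hji
      have e1 : Theta m ε c (i + 2, j) = r (i + 2, j) := by
        by_cases h : i + 2 ∈ Iset m ε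
        · have := mem_Iset.mp h
          exact ih _ _ h hj (by omega) (by omega)
        · rw [theta_zero m ε c (by rintro ⟨h1, -, -⟩; exact h h1),
            hvan (i + 2, j) (by rintro ⟨h1, -, -⟩; exact h h1)]
      have e2 : Theta m ε c (i, j - 2) = r (i, j - 2) := by
        by_cases h : j - 2 ∈ Iset m ε
        · have := mem_Iset.mp h
          exact ih _ _ hi h (by omega) (by omega)
        · rw [theta_zero m ε c (by rintro ⟨-, h1, -⟩; exact h h1),
            hvan (i, j - 2) (by rintro ⟨-, h1, -⟩; exact h h1)]
      have e3 : Theta m ε c (i + 2, j - 2) = r (i + 2, j - 2) := by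
        by_cases h : i + 2 ∈ Iset m ε
        · by_cases h' : j - 2 ∈ Iset m ε
          · have := mem_Iset.mp h; have := mem_Iset.mp h'
            exact ih _ _ h h' (by omega) (by omega)
          · rw [theta_zero m ε c (by rintro ⟨-, h1, -⟩; exact h' h1),
              hvan (i + 2, j - 2) (by rintro ⟨-, h1, -⟩; exact h' h1)]
        · rw [theta_zero m ε c (by rintro ⟨h1, -, -⟩; exact h h1),
            hvan (i + 2, j - 2) (by rintro ⟨h1, -, -⟩; exact h h1)]
      have e4 := invTab_val m ε r hpos hi hj hji
      rw [e1, e2, e3] at KI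
      rw [← hc] at e4
      omega
  intro p
  by_cases h : p.1 ∈ Iset m ε ∧ p.2 ∈ Iset m ε ∧ p.2 ≤ p.1
  · obtain ⟨i, j⟩ := p
    exact main (4 * (m : ℤ) - i + j).toNat i j h.1 h.2.1 h.2.2 le_rfl
  · rw [theta_zero m ε c h, hvan p h]

/-- Full symmetry of `r` from the domain symmetry and vanishing. -/
lemma rsym_all (m : ℕ) (ε : ℤ) (r : ℤ × ℤ → ℕ)
    (hvan : ∀ p : ℤ × ℤ, ¬(p.1 ∈ Iset m ε ∧ p.2 ∈ Iset m ε ∧ p.2 ≤ p.1) → r p = 0)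
    (hsym : ∀ i j : ℤ, i ∈ Iset m ε → j ∈ Iset m ε → j ≤ i → r (-j, -i) = r (i, j)) :
    ∀ a b : ℤ, b ≤ a → r (-b, -a) = r (a, b) := by
  intro a b hba
  by_cases h : a ∈ Iset m ε ∧ b ∈ Iset m ε
  · exact hsym a b h.1 h.2 hba
  · rw [hvan (a, b) (by rintro ⟨h1, h2, -⟩; exact h ⟨h1, h2⟩),
      hvan (-b, -a)]
    rintro ⟨h1, h2, -⟩
    exact h ⟨neg_neg a ▸ neg_mem_Iset h2, neg_neg b ▸ neg_mem_Iset h1⟩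

lemma invTab_mem (m : ℕ) (ε : ℤ) (δ : ℤ → ℕ) (r : ℤ × ℤ → ℕ) (hr : r ∈ RSet m ε δ) :
    invTab m ε r ∈ TabSet m ε δ := by
  obtain ⟨hvan, hsym, hdiag, hpos⟩ := hr
  have hsym' := rsym_all m ε r hvan hsym
  refine ⟨?_, ?_, ?_⟩
  · intro p hp
    simp only [invTab]
    rw [if_neg hp]
  · intro i j hi hj hji
    have d1 : (-j : ℤ) ∈ Iset m ε := neg_mem_Iset hj
    have d2 : (-i : ℤ) ∈ Iset m ε := neg_mem_Iset hi
    simp only [invTab]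
    rw [if_pos ⟨d1, d2, by omega⟩, if_pos ⟨hi, hj, hji⟩]
    have a1 : r (-j, -i) = r (i, j) := hsym' i j hji
    have a2 : r (-j + 2, -i) = r (i, j - 2) := by
      have : (-j + 2 : ℤ) = -(j - 2) := by ring
      rw [this]; exact hsym' i (j - 2) (by omega)
    have a3 : r (-j, -i - 2) = r (i + 2, j) := by
      have : (-i - 2 : ℤ) = -(i + 2) := by ring
      rw [this]; exact hsym' (i + 2) j (by omega)
    have a4 : r (-j + 2, -i - 2) = r (i + 2, j - 2) := by
      have h1 : (-j + 2 : ℤ) = -(j - 2) := by ring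
      have h2 : (-i - 2 : ℤ) = -(i + 2) := by ring
      rw [h1, h2]; exact hsym' (i + 2) (j - 2) (by omega)
    simp only [a1, a2, a3, a4]
    omega
  · intro i hi
    have h1 : ∑ q ∈ ((Iset m ε) ×ˢ (Iset m ε)).filter (fun q => i ≤ q.1 ∧ q.2 ≤ i),
        invTab m ε r q = Theta m ε (invTab m ε r) (i, i) := by
      simp only [Theta]; rw [if_pos ⟨hi, hi, le_refl _⟩]
    rw [h1, theta_invTab m ε r hvan hpos (i, i)]
    exact hdiag i hi

/-- `Θ` is a bijection between the set of symmetric `I`-tableaux of dimension vector `δ`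
and the set of "rank" tableaux `R` with `r_{i,i} = δ_i` and nonnegative second differences;
its inverse is given by `c_{i,j} = r_{i,j} - r_{i+2,j} - r_{i,j-2} + r_{i+2,j-2}`. -/
theorem stmt11 (m : ℕ) (ε : ℤ) (hε : ε = 0 ∨ ε = 1) (δ : ℤ → ℕ)
    (hδ : ∀ i : ℤ, δ (-i) = δ i) :
    Set.BijOn (Theta m ε) (TabSet m ε δ) (RSet m ε δ) ∧
    ∀ c ∈ TabSet m ε δ, ∀ i j : ℤ, i ∈ Iset m ε → j ∈ Iset m ε → j ≤ i →
      (c (i, j) : ℤ) = (Theta m ε c (i, j) : ℤ) - (Theta m ε c (i + 2, j) : ℤ)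
        - (Theta m ε c (i, j - 2) : ℤ) + (Theta m ε c (i + 2, j - 2) : ℤ) := by
  constructor
  · refine ⟨?_, ?_, ?_⟩
    · -- MapsTo
      rintro c ⟨hvan, hsym, hdim⟩
      refine ⟨fun p hp => theta_zero m ε c hp,
        fun i j hi hj hji => theta_sym m ε c hvan hsym hi hj hji,
        fun i hi => ?_, fun i j hi hj hji => ?_⟩
      · simp only [Theta]
        rw [if_pos ⟨hi, hi, le_refl _⟩]
        exact hdim i hi
      · have KI := key_identity m ε c hi hj hji
        omega
    · -- InjOn
      rintro c1 ⟨hvan1, -, -⟩ c2 ⟨hvan2, -, -⟩ h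
      funext p
      by_cases hp : p.1 ∈ Iset m ε ∧ p.2 ∈ Iset m ε ∧ p.2 ≤ p.1
      · obtain ⟨i, j⟩ := p
        obtain ⟨hi, hj, hji⟩ := hp
        have hiA : i ∈ Iset m ε := hi
        have hjA : j ∈ Iset m ε := hj
        have hjiA : j ≤ i := hji
        have K1 := key_identity m ε c1 hiA hjA hjiA
        have K2 := key_identity m ε c2 hiA hjA hjiA
        rw [h] at K1
        omega
      · rw [hvan1 p hp, hvan2 p hp]
    · -- SurjOn
      intro r hr
      exact ⟨invTab m ε r, invTab_mem m ε δ r hr,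
        funext (theta_invTab m ε r hr.1 hr.2.2.2)⟩
  · rintro c ⟨hvan, hsym, hdim⟩ i j hi hj hji
    have KI := key_identity m ε c hi hj hji
    omega
end

section
/- In the setting of the previous statement (I a symmetric set of nonzero odd integers, quadratic space V of dimension 2N with the hyperbolic-type basis), two maximal isotropic subspaces L_J and L_{J'} (for maximal admissible J, J') lie in the same SO(V)-orbit if and only if #{(i,j) ∈ J : i < 0} ≡ #{(i,j) ∈ J' : i < 0} (mod 2). -/
/-- The index set `S = {(i,j) : i ∈ I, 1 ≤ j ≤ δ_i}` of the basis `{u_{i,j}}` of `V`. -/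
def Sset (I : Finset ℤ) (δ : ℤ → ℕ) : Finset (ℤ × ℕ) :=
  I.biUnion (fun i => (Finset.Icc 1 (δ i)).image (fun j => (i, j)))

/-- The symmetric bilinear form on `V = (↥S → k)` with
`⟨u_{i,r}, u_{j,s}⟩ = 1` if `i + j = 0` and `r = s`, and `0` otherwise. -/
def Bform (k : Type*) [Field k] (I : Finset ℤ) (δ : ℤ → ℕ)
    (u v : {x // x ∈ Sset I δ} → k) : k :=
  ∑ p : {x // x ∈ Sset I δ}, ∑ q : {x // x ∈ Sset I δ},
    (if (p : ℤ × ℕ).1 + (q : ℤ × ℕ).1 = 0 ∧ (p : ℤ × ℕ).2 = (q : ℤ × ℕ).2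
      then (1 : k) else 0) * u p * v q

/-- `J ⊆ S` is admissible if `(i,j), (i',j) ∈ J` implies `i + i' ≠ 0`. -/
def Admissible (I : Finset ℤ) (δ : ℤ → ℕ) (J : Finset (ℤ × ℕ)) : Prop :=
  J ⊆ Sset I δ ∧ ∀ p ∈ J, ∀ q ∈ J, p.2 = q.2 → p.1 + q.1 ≠ 0

/-- The subspace `L_J` of `V` spanned by the basis vectors `u_{i,j}` with `(i,j) ∈ J`. -/
def LJ (k : Type*) [Field k] (I : Finset ℤ) (δ : ℤ → ℕ) (J : Finset (ℤ × ℕ)) :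
    Submodule k ({x // x ∈ Sset I δ} → k) :=
  Submodule.span k
    {u | ∃ p : {x // x ∈ Sset I δ}, (p : ℤ × ℕ) ∈ J ∧ u = Pi.single p (1 : k)}



def sigmaP (p : ℤ × ℕ) : ℤ × ℕ := (-p.1, p.2)

lemma mem_Sset {I : Finset ℤ} {δ : ℤ → ℕ} {p : ℤ × ℕ} :
    p ∈ Sset I δ ↔ p.1 ∈ I ∧ 1 ≤ p.2 ∧ p.2 ≤ δ p.1 := by
  constructor
  · intro h
    simp only [Sset, Finset.mem_biUnion, Finset.mem_image, Finset.mem_Icc] at h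
    obtain ⟨i, hi, j, hj, rfl⟩ := h
    exact ⟨hi, hj.1, hj.2⟩
  · intro ⟨h1, h2, h3⟩
    simp only [Sset, Finset.mem_biUnion, Finset.mem_image, Finset.mem_Icc]
    exact ⟨p.1, h1, p.2, ⟨h2, h3⟩, rfl⟩

lemma sigmaP_mem {I : Finset ℤ} {δ : ℤ → ℕ} (hIsym : ∀ i ∈ I, -i ∈ I)
    (hδ : ∀ i, δ (-i) = δ i) {p : ℤ × ℕ} (hp : p ∈ Sset I δ) : sigmaP p ∈ Sset I δ := by
  rw [mem_Sset] at hp ⊢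
  refine ⟨hIsym _ hp.1, hp.2.1, ?_⟩
  show p.2 ≤ δ (-p.1)
  rw [hδ]; exact hp.2.2

lemma sigmaP_inj : Function.Injective sigmaP := by
  intro a b h
  obtain ⟨a1, a2⟩ := a
  obtain ⟨b1, b2⟩ := b
  simp only [sigmaP, Prod.mk.injEq] at h ⊢
  exact ⟨by omega, h.2⟩

lemma sigmaP_sigmaP (p : ℤ × ℕ) : sigmaP (sigmaP p) = p := by
  simp [sigmaP]

def sigmaT {I : Finset ℤ} {δ : ℤ → ℕ} (hIsym : ∀ i ∈ I, -i ∈ I) (hδ : ∀ i, δ (-i) = δ i)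
    (p : {x // x ∈ Sset I δ}) : {x // x ∈ Sset I δ} :=
  ⟨sigmaP ↑p, sigmaP_mem hIsym hδ p.2⟩

section Swaps

variable {α : Type*} [DecidableEq α]

def swapsFun (σ : α → α) (D : Finset α) (p : α) : α :=
  if p ∈ D ∨ σ p ∈ D then σ p else p

lemma swapsFun_involutive {σ : α → α} (hσ : Function.Involutive σ) (D : Finset α) :
    Function.Involutive (swapsFun σ D) := by
  intro p
  unfold swapsFun
  by_cases h : p ∈ D ∨ σ p ∈ D
  · rw [if_pos h, hσ, if_pos h.symm]
  · rw [if_neg h, if_neg h]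

def swapsPerm {σ : α → α} (hσ : Function.Involutive σ) (D : Finset α) :
    Equiv.Perm α := (swapsFun_involutive hσ D).toPerm

lemma swapsPerm_apply {σ : α → α} (hσ : Function.Involutive σ) (D : Finset α) (p : α) :
    swapsPerm hσ D p = if p ∈ D ∨ σ p ∈ D then σ p else p := rfl

lemma swapsPerm_symm {σ : α → α} (hσ : Function.Involutive σ) (D : Finset α) :
    (swapsPerm hσ D).symm = swapsPerm hσ D := rfl

lemma sign_swapsPerm [Fintype α] {σ : α → α} (hσ : Function.Involutive σ)
    (hfix : ∀ p, σ p ≠ p) (D : Finset α) :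
    (∀ p ∈ D, σ p ∉ D) → Equiv.Perm.sign (swapsPerm hσ D) = (-1) ^ D.card := by
  induction D using Finset.induction_on with
  | empty =>
      intro _
      have h1 : swapsPerm hσ (∅ : Finset α) = 1 := by
        ext p
        rw [swapsPerm_apply]
        simp
      rw [h1]
      simp
  | @insert a D ha ih =>
      intro hD
      have hσa : σ a ∉ insert a D := hD a (Finset.mem_insert_self a D)
      have hσaD : σ a ∉ D := fun h => hσa (Finset.mem_insert_of_mem h)
      have hσaa : σ a ≠ a := hfix a
      have hstep : swapsPerm hσ (insert a D) = Equiv.swap a (σ a) * swapsPerm hσ D := by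
        ext p
        rw [Equiv.Perm.mul_apply, swapsPerm_apply, swapsPerm_apply]
        by_cases hpa : p = a
        · subst hpa
          rw [if_pos (Or.inl (Finset.mem_insert_self p D)), if_neg, Equiv.swap_apply_left]
          push_neg
          exact ⟨ha, hσaD⟩
        · by_cases hpsa : p = σ a
          · subst hpsa
            have h1 : σ (σ a) = a := hσ a
            rw [h1]
            rw [if_pos (Or.inr (Finset.mem_insert_self a D)),
                if_neg (by push_neg; exact ⟨hσaD, ha⟩), Equiv.swap_apply_right]
          · have hσpa : σ p ≠ a := fun h => hpsa (by rw [← h, hσ])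
            have hσpsa : σ p ≠ σ a := fun h => hpa (hσ.injective h)
            by_cases hc : p ∈ D ∨ σ p ∈ D
            · rw [if_pos, if_pos hc, Equiv.swap_apply_of_ne_of_ne hσpa hσpsa]
              rcases hc with h | h
              · exact Or.inl (Finset.mem_insert_of_mem h)
              · exact Or.inr (Finset.mem_insert_of_mem h)
            · push_neg at hc
              rw [if_neg, if_neg (by push_neg; exact hc), Equiv.swap_apply_of_ne_of_ne hpa hpsa]
              simp only [Finset.mem_insert, not_or]
              exact ⟨⟨hpa, hc.1⟩, ⟨hσpa, hc.2⟩⟩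
      rw [hstep, map_mul, Equiv.Perm.sign_swap hσaa.symm, ih (fun p hp hc => hD p (Finset.mem_insert_of_mem hp) (Finset.mem_insert_of_mem hc)), Finset.card_insert_of_notMem ha, pow_succ]
      exact mul_comm _ _

end Swaps


lemma det_funLeft {k : Type*} [Field k] {α : Type*} [Fintype α] [DecidableEq α]
    (π : Equiv.Perm α) :
    LinearMap.det (LinearMap.funLeft k k π) = ((Equiv.Perm.sign π : ℤ) : k) := by
  rw [← LinearMap.det_toMatrix' (LinearMap.funLeft k k π)]
  have h1 : LinearMap.toMatrix' (LinearMap.funLeft k k (π : α → α)) = π.permMatrix k := by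
    ext i j
    rw [LinearMap.toMatrix'_apply, Equiv.Perm.permMatrix, PEquiv.toMatrix_toPEquiv_eq, Matrix.submatrix_apply,
      LinearMap.funLeft_apply, Matrix.one_apply, Pi.single_apply, id]
  rw [h1, Matrix.det_permutation]

lemma mem_LJ_iff {k : Type*} [Field k] {I : Finset ℤ} {δ : ℤ → ℕ} (J : Finset (ℤ × ℕ))
    (u : {x // x ∈ Sset I δ} → k) :
    u ∈ LJ k I δ J ↔ ∀ p : {x // x ∈ Sset I δ}, (p : ℤ × ℕ) ∉ J → u p = 0 := by
  classical
  constructor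
  · intro hu
    let K : Submodule k ({x // x ∈ Sset I δ} → k) :=
      { carrier := {v | ∀ q : {x // x ∈ Sset I δ}, (q : ℤ × ℕ) ∉ J → v q = 0}
        add_mem' := fun ha hb q hq => by
          simp only [Pi.add_apply]
          rw [ha q hq, hb q hq, add_zero]
        zero_mem' := fun q hq => rfl
        smul_mem' := fun c x hx q hq => by
          simp only [Pi.smul_apply]
          rw [hx q hq, smul_zero] }
    have hle : LJ k I δ J ≤ K := by
      rw [LJ, Submodule.span_le]
      rintro v ⟨q, hq, rfl⟩ r hr
      exact Pi.single_eq_of_ne (fun h => hr (by rw [h]; exact hq)) 1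
    exact hle hu
  · intro hu
    have hrep : u = ∑ p ∈ Finset.univ.filter
        (fun p : {x // x ∈ Sset I δ} => (p : ℤ × ℕ) ∈ J), u p • (Pi.single p (1 : k) : {x // x ∈ Sset I δ} → k) := by
      funext q
      rw [Finset.sum_apply]
      by_cases hq : (q : ℤ × ℕ) ∈ J
      · rw [Finset.sum_eq_single q]
        · simp
        · intro b _ hb
          simp only [Pi.smul_apply]
          rw [Pi.single_eq_of_ne (Ne.symm hb) 1, smul_zero]
        · intro h
          exact absurd (Finset.mem_filter.mpr ⟨Finset.mem_univ q, hq⟩) h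
      · rw [hu q hq]
        symm
        apply Finset.sum_eq_zero
        intro p hp
        have hne : q ≠ p := fun h => hq (h ▸ (Finset.mem_filter.mp hp).2)
        simp only [Pi.smul_apply]
        rw [Pi.single_eq_of_ne hne 1, smul_zero]
    rw [hrep]
    apply Submodule.sum_mem
    intro p hp
    apply Submodule.smul_mem
    apply Submodule.subset_span
    exact ⟨p, (Finset.mem_filter.mp hp).2, rfl⟩

abbrev JsubT (I : Finset ℤ) (δ : ℤ → ℕ) (J : Finset (ℤ × ℕ)) : Type :=
  {q : {x // x ∈ Sset I δ} // (q : ℤ × ℕ) ∈ J}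

/-- For `I` a finite symmetric set of nonzero odd integers and `δ` symmetric, and `J, J'`
maximal admissible subsets, the maximal isotropic subspaces `L_J` and `L_{J'}` lie in the
same `SO(V)`-orbit if and only if
`#{(i,j) ∈ J : i < 0} ≡ #{(i,j) ∈ J' : i < 0} (mod 2)`. -/
theorem stmt14 (k : Type*) [Field k] [IsAlgClosed k] (h2 : (2 : k) ≠ 0)
    (I : Finset ℤ) (δ : ℤ → ℕ)
    (hIodd : ∀ i ∈ I, i % 2 = 1) (hIsym : ∀ i ∈ I, -i ∈ I)
    (hδ : ∀ i : ℤ, δ (-i) = δ i)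
    (J J' : Finset (ℤ × ℕ)) (hJ : Admissible I δ J)
    (hmax : ∀ J'' : Finset (ℤ × ℕ), Admissible I δ J'' → J ⊆ J'' → J'' = J)
    (hJ' : Admissible I δ J')
    (hmax' : ∀ J'' : Finset (ℤ × ℕ), Admissible I δ J'' → J' ⊆ J'' → J'' = J') :
    (∃ g : ({x // x ∈ Sset I δ} → k) ≃ₗ[k] ({x // x ∈ Sset I δ} → k),
      (∀ u v, Bform k I δ (g u) (g v) = Bform k I δ u v) ∧
      LinearMap.det g.toLinearMap = 1 ∧
      Submodule.map g.toLinearMap (LJ k I δ J) = LJ k I δ J') ↔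
    (J.filter (fun p => p.1 < 0)).card % 2 = (J'.filter (fun p => p.1 < 0)).card % 2 := by
  classical
  have prodext : ∀ {a b : ℤ × ℕ}, a.1 = b.1 → a.2 = b.2 → a = b := by
    intro a b h1 h2
    obtain ⟨x, y⟩ := a; obtain ⟨z, w⟩ := b
    simp_all
  have hodd_ne : ∀ p : ℤ × ℕ, p ∈ Sset I δ → p.1 ≠ 0 := by
    intro p hp h0
    have := hIodd p.1 (mem_Sset.mp hp).1
    omega
  set σ : {x // x ∈ Sset I δ} → {x // x ∈ Sset I δ} := sigmaT hIsym hδ with hσdef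
  have hσcoe : ∀ p : {x // x ∈ Sset I δ}, (σ p : ℤ × ℕ) = sigmaP (p : ℤ × ℕ) := fun p => rfl
  have hσinv : Function.Involutive σ := by
    intro p
    apply Subtype.ext
    rw [hσcoe, hσcoe, sigmaP_sigmaP]
  have hσfix : ∀ p, σ p ≠ p := by
    intro p h
    have h1 : (σ p : ℤ × ℕ).1 = (p : ℤ × ℕ).1 := congrArg (fun x : {x // x ∈ Sset I δ} => (x : ℤ × ℕ).1) h
    rw [hσcoe] at h1
    have h2 := hodd_ne _ p.2
    simp only [sigmaP] at h1
    omega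
  have hdisj : ∀ J₀ : Finset (ℤ × ℕ), Admissible I δ J₀ → ∀ p ∈ J₀, sigmaP p ∉ J₀ := by
    intro J₀ hA p hp hsp
    exact hA.2 p hp _ hsp rfl (by simp [sigmaP])
  have hcompl : ∀ J₀ : Finset (ℤ × ℕ), Admissible I δ J₀ →
      (∀ J'' : Finset (ℤ × ℕ), Admissible I δ J'' → J₀ ⊆ J'' → J'' = J₀) →
      ∀ p : ℤ × ℕ, p ∈ Sset I δ → p ∉ J₀ → sigmaP p ∈ J₀ := by
    intro J₀ hA hmx p hpS hpJ
    by_contra hsp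
    have hadm : Admissible I δ (insert p J₀) := by
      constructor
      · intro q hq
        rcases Finset.mem_insert.mp hq with h | h
        · rw [h]; exact hpS
        · exact hA.1 h
      · intro q hq r hr h2 h1
        rcases Finset.mem_insert.mp hq with h | h <;> rcases Finset.mem_insert.mp hr with h' | h'
        · have hodd := hIodd p.1 (mem_Sset.mp hpS).1
          rw [h, h'] at h1
          omega
        · apply hsp
          rw [h] at h1 h2
          have : r = sigmaP p := prodext (show r.1 = (sigmaP p).1 by show r.1 = -p.1; omega) h2.symm
          exact this ▸ h'
        · apply hsp
          rw [h'] at h1 h2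
          have : q = sigmaP p := prodext (show q.1 = (sigmaP p).1 by show q.1 = -p.1; omega) h2
          exact this ▸ h
        · exact hA.2 q h r h' h2 h1
    have heq := hmx _ hadm (Finset.subset_insert p J₀)
    exact hpJ (heq ▸ Finset.mem_insert_self p J₀)
  have hB : ∀ u v : {x // x ∈ Sset I δ} → k,
      Bform k I δ u v = ∑ p, u p * v (σ p) := by
    intro u v
    unfold Bform
    apply Finset.sum_congr rfl
    intro p _
    rw [Finset.sum_eq_single (σ p)]
    · have hcond : ((p : ℤ × ℕ).1 + ((σ p : {x // x ∈ Sset I δ}) : ℤ × ℕ).1 = 0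
          ∧ (p : ℤ × ℕ).2 = ((σ p : {x // x ∈ Sset I δ}) : ℤ × ℕ).2) := by
        rw [hσcoe]
        exact ⟨by simp [sigmaP], rfl⟩
      rw [if_pos hcond, one_mul]
    · intro q _ hq
      have hcond : ¬ ((p : ℤ × ℕ).1 + (q : ℤ × ℕ).1 = 0 ∧ (p : ℤ × ℕ).2 = (q : ℤ × ℕ).2) := by
        rintro ⟨h1, h2⟩
        apply hq
        apply Subtype.ext
        rw [hσcoe]
        exact prodext (show (q : ℤ × ℕ).1 = -(p : ℤ × ℕ).1 by omega) h2.symm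
      rw [if_neg hcond, zero_mul, zero_mul]
    · intro h; exact absurd (Finset.mem_univ (σ p)) h
  -- the swap permutation associated to D = J \ J'
  set Dt : Finset {x // x ∈ Sset I δ} := (J \ J').subtype (fun x => x ∈ Sset I δ) with hDtdef
  have hmemDt : ∀ p : {x // x ∈ Sset I δ}, p ∈ Dt ↔ (p : ℤ × ℕ) ∈ J ∧ (p : ℤ × ℕ) ∉ J' := by
    intro p
    rw [hDtdef, Finset.mem_subtype, Finset.mem_sdiff]
  set π : Equiv.Perm {x // x ∈ Sset I δ} := swapsPerm hσinv Dt with hπdef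
  have hππ : ∀ p, π (π p) = p := fun p => swapsFun_involutive hσinv Dt p
  have hπJJ' : ∀ p : {x // x ∈ Sset I δ}, (p : ℤ × ℕ) ∈ J → ((π p : {x // x ∈ Sset I δ}) : ℤ × ℕ) ∈ J' := by
    intro p hp
    rw [hπdef, swapsPerm_apply]
    by_cases hD : p ∈ Dt
    · rw [if_pos (Or.inl hD), hσcoe]
      exact hcompl J' hJ' hmax' (p : ℤ × ℕ) p.2 ((hmemDt p).mp hD).2
    · have hσD : σ p ∉ Dt := by
        intro hc
        have h1 := ((hmemDt _).mp hc).1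
        rw [hσcoe] at h1
        exact hdisj J hJ (p : ℤ × ℕ) hp h1
      rw [if_neg (by push_neg; exact ⟨hD, hσD⟩)]
      by_contra hc
      exact hD ((hmemDt p).mpr ⟨hp, hc⟩)
  have hπJ'J : ∀ p : {x // x ∈ Sset I δ}, (p : ℤ × ℕ) ∈ J' → ((π p : {x // x ∈ Sset I δ}) : ℤ × ℕ) ∈ J := by
    intro p hp
    rw [hπdef, swapsPerm_apply]
    by_cases hD : (p : ℤ × ℕ) ∈ J
    · have h1 : p ∉ Dt := fun hc => ((hmemDt p).mp hc).2 hp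
      have h2 : σ p ∉ Dt := by
        intro hc
        have h3 := ((hmemDt _).mp hc).1
        rw [hσcoe] at h3
        exact hdisj J hJ (p : ℤ × ℕ) hD h3
      rw [if_neg (by push_neg; exact ⟨h1, h2⟩)]
      exact hD
    · have h1 : σ p ∈ Dt := by
        rw [hmemDt, hσcoe]
        exact ⟨hcompl J hJ hmax (p : ℤ × ℕ) p.2 hD, hdisj J' hJ' (p : ℤ × ℕ) hp⟩
      rw [if_pos (Or.inr h1), hσcoe]
      exact hcompl J hJ hmax (p : ℤ × ℕ) p.2 hD
  have hcommπ : ∀ p, π (σ p) = σ (π p) := by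
    intro p
    rw [hπdef, swapsPerm_apply, swapsPerm_apply]
    by_cases hc : p ∈ Dt ∨ σ p ∈ Dt
    · have hc' : σ p ∈ Dt ∨ σ (σ p) ∈ Dt := by rw [hσinv p]; exact hc.symm
      rw [if_pos hc', if_pos hc]
    · have hc' : ¬(σ p ∈ Dt ∨ σ (σ p) ∈ Dt) := by rw [hσinv p]; exact fun h => hc h.symm
      rw [if_neg hc', if_neg hc]
  set gD : ({x // x ∈ Sset I δ} → k) ≃ₗ[k] ({x // x ∈ Sset I δ} → k) :=
    LinearEquiv.funCongrLeft k k (π : {x // x ∈ Sset I δ} ≃ {x // x ∈ Sset I δ}) with hgDdef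
  have hgD_apply : ∀ (u : {x // x ∈ Sset I δ} → k) p, gD u p = u (π p) := fun u p => rfl
  have hgD_symm_apply : ∀ (u : {x // x ∈ Sset I δ} → k) p, gD.symm u p = u (π p) :=
    fun u p => rfl
  have hdet_gD : LinearMap.det gD.toLinearMap = ((Equiv.Perm.sign π : ℤ) : k) :=
    det_funLeft π
  have hformD : ∀ u v, Bform k I δ (gD u) (gD v) = Bform k I δ u v := by
    intro u v
    rw [hB, hB]
    calc (∑ p, gD u p * gD v (σ p)) = ∑ p, u (π p) * v (σ (π p)) := by
          refine Finset.sum_congr rfl fun p _ => ?_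
          rw [hgD_apply, hgD_apply, hcommπ]
      _ = ∑ p, u p * v (σ p) := Equiv.sum_comp π (fun q => u q * v (σ q))
  have hmap_gen : ∀ A B : Finset (ℤ × ℕ),
      (∀ p : {x // x ∈ Sset I δ}, (p : ℤ × ℕ) ∈ A → ((π p : {x // x ∈ Sset I δ}) : ℤ × ℕ) ∈ B) →
      (∀ p : {x // x ∈ Sset I δ}, (p : ℤ × ℕ) ∈ B → ((π p : {x // x ∈ Sset I δ}) : ℤ × ℕ) ∈ A) →
      Submodule.map gD.toLinearMap (LJ k I δ A) = LJ k I δ B := by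
    intro A B hAB hBA
    ext v
    rw [show gD.toLinearMap = (gD : ({x // x ∈ Sset I δ} → k) →ₗ[k] ({x // x ∈ Sset I δ} → k)) from rfl,
      Submodule.mem_map_equiv, mem_LJ_iff, mem_LJ_iff]
    constructor
    · intro h q hq
      have h1 : ((π q : {x // x ∈ Sset I δ}) : ℤ × ℕ) ∉ A := by
        intro hc
        have h2 := hAB _ hc
        rw [hππ q] at h2
        exact hq h2
      have h3 := h (π q) h1
      rw [hgD_symm_apply, hππ q] at h3
      exact h3
    · intro h q hq
      rw [hgD_symm_apply]
      apply h
      intro hc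
      have h2 := hBA _ hc
      rw [hππ q] at h2
      exact hq h2
  have hDt_disj : ∀ p ∈ Dt, σ p ∉ Dt := by
    intro p hp hc
    have h1 := ((hmemDt p).mp hp).1
    have h2 := ((hmemDt _).mp hc).1
    rw [hσcoe] at h2
    exact hdisj J hJ (p : ℤ × ℕ) h1 h2
  have hsign : Equiv.Perm.sign π = (-1) ^ (J \ J').card := by
    rw [hπdef, sign_swapsPerm hσinv hσfix Dt hDt_disj]
    congr 1
    rw [hDtdef, Finset.card_subtype, Finset.filter_true_of_mem]
    intro x hx
    exact hJ.1 (Finset.mem_sdiff.mp hx).1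
  -- parity lemma
  have hpar : ((J.filter (fun p => p.1 < 0)).card % 2 = (J'.filter (fun p => p.1 < 0)).card % 2)
      ↔ (J \ J').card % 2 = 0 := by
    have himg : (J \ J').image sigmaP = J' \ J := by
      apply Finset.ext
      intro q
      simp only [Finset.mem_image, Finset.mem_sdiff]
      constructor
      · rintro ⟨p, ⟨hpJ2, hpJ2'⟩, rfl⟩
        exact ⟨hcompl J' hJ' hmax' p (hJ.1 hpJ2) hpJ2', hdisj J hJ p hpJ2⟩
      · rintro ⟨hqJ', hqJ⟩
        exact ⟨sigmaP q, ⟨hcompl J hJ hmax q (hJ'.1 hqJ') hqJ, hdisj J' hJ' q hqJ'⟩,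
          sigmaP_sigmaP q⟩
    have hneg' : ((J' \ J).filter (fun p => p.1 < 0)).card
        = ((J \ J').filter (fun p => ¬ p.1 < 0)).card := by
      rw [← himg, Finset.filter_image, Finset.card_image_of_injective _ sigmaP_inj]
      congr 1
      apply Finset.filter_congr
      intro x hx
      have hx0 : x.1 ≠ 0 := hodd_ne x (hJ.1 (Finset.mem_sdiff.mp hx).1)
      show (sigmaP x).1 < 0 ↔ ¬ x.1 < 0
      simp only [sigmaP]
      omega
    have hsplit : ∀ K K' : Finset (ℤ × ℕ), (K.filter (fun p => p.1 < 0)).card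
        = ((K \ K').filter (fun p => p.1 < 0)).card + ((K ∩ K').filter (fun p => p.1 < 0)).card := by
      intro K K'
      conv_lhs => rw [← Finset.sdiff_union_inter K K']
      rw [Finset.filter_union, Finset.card_union_of_disjoint
        (Finset.disjoint_filter_filter (Finset.disjoint_sdiff_inter K K'))]
    have hfn := Finset.card_filter_add_card_filter_not
      (s := J \ J') (p := fun p : ℤ × ℕ => p.1 < 0)
    have hJJ : J' ∩ J = J ∩ J' := Finset.inter_comm J' J
    rw [hsplit J J', hsplit J' J, hJJ, hneg']
    omega
  -- Lemma A : any isometry stabilizing L_J has determinant 1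
  have lemA : ∀ f : ({x // x ∈ Sset I δ} → k) ≃ₗ[k] ({x // x ∈ Sset I δ} → k),
      (∀ u v, Bform k I δ (f u) (f v) = Bform k I δ u v) →
      Submodule.map f.toLinearMap (LJ k I δ J) = LJ k I δ J →
      LinearMap.det f.toLinearMap = 1 := by
    intro f hf hfixf
    set M := LinearMap.toMatrix' f.toLinearMap with hMdef
    have hM : ∀ p q : {x // x ∈ Sset I δ}, M p q = f (Pi.single q 1) p := by
      intro p q
      rw [hMdef, LinearMap.toMatrix'_apply]
      have h1 : (fun j' : {x // x ∈ Sset I δ} => if j' = q then (1 : k) else 0)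
          = (Pi.single q (1 : k) : {x // x ∈ Sset I δ} → k) :=
        funext fun j' => (Pi.single_apply q (1 : k) j').symm
      rfl
    have hsingle : ∀ q : {x // x ∈ Sset I δ}, (q : ℤ × ℕ) ∈ J →
        f (Pi.single q 1) ∈ LJ k I δ J := by
      intro q hq
      rw [← hfixf]
      exact Submodule.mem_map_of_mem (Submodule.subset_span ⟨q, hq, rfl⟩)
    have hM0 : ∀ p q : {x // x ∈ Sset I δ}, (q : ℤ × ℕ) ∈ J → (p : ℤ × ℕ) ∉ J → M p q = 0 := by
      intro p q hq hp
      rw [hM]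
      exact (mem_LJ_iff J _).mp (hsingle q hq) p hp
    have horth : ∀ q q' : {x // x ∈ Sset I δ},
        (∑ p : {x // x ∈ Sset I δ}, M p q * M (σ p) (σ q')) = if q = q' then 1 else 0 := by
      intro q q'
      have h2 : ∀ p, M p q * M (σ p) (σ q')
          = f (Pi.single q 1) p * (f (Pi.single (σ q') 1)) (σ p) := by
        intro p
        rw [hM, hM]
      calc (∑ p, M p q * M (σ p) (σ q'))
          = Bform k I δ (f (Pi.single q 1)) (f (Pi.single (σ q') 1)) := by
            rw [hB]
            exact Finset.sum_congr rfl fun p _ => h2 p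
        _ = Bform k I δ (Pi.single q 1) (Pi.single (σ q') 1) := hf _ _
        _ = ∑ p, (Pi.single q (1 : k) : {x // x ∈ Sset I δ} → k) p
            * (Pi.single (σ q') (1 : k) : {x // x ∈ Sset I δ} → k) (σ p) := hB _ _
        _ = if q = q' then 1 else 0 := by
            rw [Finset.sum_eq_single q]
            · rw [Pi.single_eq_same, one_mul]
              by_cases h : q = q'
              · rw [if_pos h, h, Pi.single_eq_same]
              · rw [if_neg h, Pi.single_eq_of_ne (fun hc => h (hσinv.injective hc)) 1]
            · intro b _ hb
              rw [Pi.single_eq_of_ne hb 1, zero_mul]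
            · intro hq; exact absurd (Finset.mem_univ q) hq
    have hbij : Function.Bijective
        (Sum.elim (fun q : JsubT I δ J => (q : {x // x ∈ Sset I δ}))
          (fun q : JsubT I δ J => σ (q : {x // x ∈ Sset I δ}))) := by
      constructor
      · rintro (a | a) (b | b) hab
        · rw [Sum.elim_inl, Sum.elim_inl] at hab
          exact congrArg Sum.inl (Subtype.ext hab)
        · rw [Sum.elim_inl, Sum.elim_inr] at hab
          exfalso
          have h1 : ((σ (b : {x // x ∈ Sset I δ}) : {x // x ∈ Sset I δ}) : ℤ × ℕ) ∈ J := by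
            rw [← hab]; exact a.2
          rw [hσcoe] at h1
          exact hdisj J hJ _ b.2 h1
        · rw [Sum.elim_inr, Sum.elim_inl] at hab
          exfalso
          have h1 : ((σ (a : {x // x ∈ Sset I δ}) : {x // x ∈ Sset I δ}) : ℤ × ℕ) ∈ J := by
            rw [hab]; exact b.2
          rw [hσcoe] at h1
          exact hdisj J hJ _ a.2 h1
        · rw [Sum.elim_inr, Sum.elim_inr] at hab
          exact congrArg Sum.inr (Subtype.ext (hσinv.injective hab))
      · intro p
        by_cases hp : (p : ℤ × ℕ) ∈ J
        · exact ⟨Sum.inl ⟨p, hp⟩, rfl⟩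
        · refine ⟨Sum.inr ⟨σ p, ?_⟩, ?_⟩
          · show ((σ p : {x // x ∈ Sset I δ}) : ℤ × ℕ) ∈ J
            rw [hσcoe]
            exact hcompl J hJ hmax _ p.2 hp
          · exact hσinv p
    set E := Equiv.ofBijective _ hbij with hEdef
    have hE1 : ∀ a : JsubT I δ J, E (Sum.inl a) = (a : {x // x ∈ Sset I δ}) := fun a => rfl
    have hE2 : ∀ a : JsubT I δ J, E (Sum.inr a) = σ (a : {x // x ∈ Sset I δ}) := fun a => rfl
    set Am : Matrix (JsubT I δ J) (JsubT I δ J) k :=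
      Matrix.of (fun q q' => M (q : {x // x ∈ Sset I δ}) (q' : {x // x ∈ Sset I δ})) with hAm
    set Bm : Matrix (JsubT I δ J) (JsubT I δ J) k :=
      Matrix.of (fun q q' => M (q : {x // x ∈ Sset I δ}) (σ (q' : {x // x ∈ Sset I δ}))) with hBm
    set Dm : Matrix (JsubT I δ J) (JsubT I δ J) k :=
      Matrix.of (fun q q' => M (σ (q : {x // x ∈ Sset I δ})) (σ (q' : {x // x ∈ Sset I δ}))) with hDm
    have hblock : M.submatrix E E = Matrix.fromBlocks Am Bm 0 Dm := by
      ext x y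
      cases x with
      | inl q =>
          cases y with
          | inl q' => rfl
          | inr q' => rfl
      | inr q =>
          cases y with
          | inl q' =>
              have h0 : ((σ (q : {x // x ∈ Sset I δ}) : {x // x ∈ Sset I δ}) : ℤ × ℕ) ∉ J := by
                rw [hσcoe]
                exact hdisj J hJ _ q.2
              simp only [Matrix.submatrix_apply, Matrix.fromBlocks_apply₂₁, Matrix.zero_apply]
              exact hM0 _ _ q'.2 h0
          | inr q' => rfl
    have hdetM : M.det = Am.det * Dm.det := by
      rw [← Matrix.det_submatrix_equiv_self E M, hblock, Matrix.det_fromBlocks_zero₂₁]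
    have hAD : Am.transpose * Dm = 1 := by
      ext q q'
      rw [Matrix.mul_apply, Matrix.one_apply]
      have h1 := horth (q : {x // x ∈ Sset I δ}) (q' : {x // x ∈ Sset I δ})
      rw [← Equiv.sum_comp E (fun p => M p (q : {x // x ∈ Sset I δ})
        * M (σ p) (σ (q' : {x // x ∈ Sset I δ}))), Fintype.sum_sum_type] at h1
      have hz : (∑ r : JsubT I δ J, M (E (Sum.inr r)) (q : {x // x ∈ Sset I δ})
          * M (σ (E (Sum.inr r))) (σ (q' : {x // x ∈ Sset I δ}))) = 0 := by
        apply Finset.sum_eq_zero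
        intro r _
        have h0 : ((σ (r : {x // x ∈ Sset I δ}) : {x // x ∈ Sset I δ}) : ℤ × ℕ) ∉ J := by
          rw [hσcoe]
          exact hdisj J hJ _ r.2
        rw [hE2, hM0 _ _ q.2 h0, zero_mul]
      rw [hz, add_zero] at h1
      calc (∑ r, Am.transpose q r * Dm r q')
          = ∑ r : JsubT I δ J, M (E (Sum.inl r)) (q : {x // x ∈ Sset I δ})
            * M (σ (E (Sum.inl r))) (σ (q' : {x // x ∈ Sset I δ})) := by
            refine Finset.sum_congr rfl fun r _ => ?_
            rw [hE1, Matrix.transpose_apply]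
            rfl
        _ = if (q : {x // x ∈ Sset I δ}) = (q' : {x // x ∈ Sset I δ}) then 1 else 0 := h1
        _ = if q = q' then 1 else 0 := by
            by_cases h : q = q'
            · rw [if_pos h, if_pos (congrArg _ h)]
            · rw [if_neg h, if_neg (fun hc => h (Subtype.ext hc))]
    have hADdet : Am.det * Dm.det = 1 := by
      have h3 := congrArg Matrix.det hAD
      rw [Matrix.det_mul, Matrix.det_transpose, Matrix.det_one] at h3
      exact h3
    rw [← LinearMap.det_toMatrix' f.toLinearMap, ← hMdef, hdetM]
    exact hADdet
  -- main equivalence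
  constructor
  · rintro ⟨g, hgform, hgdet, hgmap⟩
    rw [hpar]
    by_contra hodd2
    have hDodd : Odd (J \ J').card := by
      rw [Nat.odd_iff]
      omega
    have hsign2 : Equiv.Perm.sign π = -1 := by
      rw [hsign]
      exact Odd.neg_one_pow hDodd
    have hcomp : (g.trans gD).toLinearMap = gD.toLinearMap ∘ₗ g.toLinearMap := rfl
    have hdetf : LinearMap.det (g.trans gD).toLinearMap = -1 := by
      rw [hcomp, LinearMap.det_comp, hgdet, mul_one, hdet_gD, hsign2]
      norm_num
    have hfixf : Submodule.map (g.trans gD).toLinearMap (LJ k I δ J) = LJ k I δ J := by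
      rw [hcomp, Submodule.map_comp, hgmap, hmap_gen J' J hπJ'J hπJJ']
    have hone := lemA (g.trans gD) (fun u v => by
      simp only [LinearEquiv.trans_apply]
      rw [hformD, hgform]) hfixf
    rw [hdetf] at hone
    exact absurd (by linear_combination -hone : (2 : k) = 0) h2
  · intro hpar2
    have hDeven : (J \ J').card % 2 = 0 := hpar.mp hpar2
    refine ⟨gD, hformD, ?_, hmap_gen J J' hπJJ' hπJ'J⟩
    have h1 : Equiv.Perm.sign π = 1 := by
      rw [hsign]
      exact Even.neg_one_pow (Nat.even_iff.mpr hDeven)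
    rw [hdet_gD, h1]
    norm_num
end

section
/- Let E be a nilpotent endomorphism of a finite-dimensional vector space V whose Jordan type is a totally even partition 2^{a(2)} 4^{a(4)} 6^{a(6)}⋯ (all parts even). Then the subspace L = E(ker E²) + E²(ker E⁴) + ⋯ + E^k(ker E^{2k}) + ⋯ satisfies 2 dim L = dim V. Moreover, if V carries a nondegenerate symmetric bilinear form ⟨,⟩ with ⟨E u, v⟩ + ⟨u, E v⟩ = 0 for all u,v, then L is a maximal isotropic subspace of V. -/
open LinearMap Submodule Module

section aux

variable {k : Type*} [Field k] {V : Type*} [AddCommGroup V] [Module k V]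
  [FiniteDimensional k V] (E : V →ₗ[k] V)

private lemma aux_map_ker (a b : ℕ) :
    Submodule.map (E ^ b) (LinearMap.ker (E ^ (a + b))) =
      LinearMap.ker (E ^ a) ⊓ LinearMap.range (E ^ b) := by
  rw [pow_add, Module.End.mul_eq_comp, LinearMap.ker_comp, Submodule.map_comap_eq]
  exact inf_comm _ _

private lemma aux_rank (a b : ℕ) :
    Module.finrank k (Submodule.map (E ^ b) (LinearMap.ker (E ^ (a + b)))) +
      Module.finrank k (LinearMap.range (E ^ (a + b))) =
      Module.finrank k (LinearMap.range (E ^ b)) := by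
  have hle : LinearMap.ker (E ^ b) ≤ LinearMap.ker (E ^ (a + b)) := by
    intro x hx
    rw [LinearMap.mem_ker] at hx ⊢
    rw [pow_add, Module.End.mul_apply, hx, map_zero]
  have e1 := LinearMap.finrank_range_add_finrank_ker
    ((E ^ b).domRestrict (LinearMap.ker (E ^ (a + b))))
  rw [LinearMap.range_domRestrict, LinearMap.ker_domRestrict] at e1
  have e1' : Module.finrank k
      (Submodule.comap (LinearMap.ker (E ^ (a + b))).subtype (LinearMap.ker (E ^ b)))
      = Module.finrank k (LinearMap.ker (E ^ b)) :=
    (Submodule.comapSubtypeEquivOfLe hle).finrank_eq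
  rw [e1'] at e1
  have e2 := LinearMap.finrank_range_add_finrank_ker (E ^ b)
  have e3 := LinearMap.finrank_range_add_finrank_ker (E ^ (a + b))
  omega

private lemma aux_ker_mono {a b : ℕ} (h : a ≤ b) :
    LinearMap.ker (E ^ a) ≤ LinearMap.ker (E ^ b) := by
  intro x hx
  rw [LinearMap.mem_ker] at hx ⊢
  have hb : b = (b - a) + a := by omega
  rw [hb, pow_add, Module.End.mul_apply, hx, map_zero]

private lemma aux_range_anti {a b : ℕ} (h : a ≤ b) :
    LinearMap.range (E ^ b) ≤ LinearMap.range (E ^ a) := by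
  have hb : b = a + (b - a) := by omega
  rw [hb, pow_add, Module.End.mul_eq_comp]
  exact LinearMap.range_comp_le_range _ _

private lemma aux_sign (B : LinearMap.BilinForm k V)
    (hB : ∀ u v : V, B (E u) v + B u (E v) = 0) :
    ∀ (j : ℕ) (u v : V), B u ((E ^ j) v) = (-1 : k) ^ j * B ((E ^ j) u) v := by
  intro j
  induction j with
  | zero => intro u v; simp
  | succ j ih =>
    intro u v
    have h1 : (E ^ (j + 1)) v = (E ^ j) (E v) := by rw [pow_succ, Module.End.mul_apply]
    have h2 : E ((E ^ j) u) = (E ^ (j + 1)) u := by rw [pow_succ', Module.End.mul_apply]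
    rw [h1, ih u (E v)]
    have h3 : B ((E ^ j) u) (E v) = - B (E ((E ^ j) u)) v :=
      eq_neg_of_add_eq_zero_right (hB ((E ^ j) u) v)
    rw [h3, h2]
    ring

end aux

/-- Let `E` be a nilpotent endomorphism of a finite-dimensional vector space `V` whose
Jordan type is a totally even partition (no odd parts: for each odd `a`, the multiplicity
`rank E^{a-1} - 2 rank E^a + rank E^{a+1}` of the part `a` vanishes). Then the subspace
`L = Σ_n E^n(ker E^{2n})` satisfies `2 dim L = dim V`; moreover, for every nondegenerate
symmetric bilinear form `B` with `B(Eu,v) + B(u,Ev) = 0`, `L` is isotropic (hence a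
maximal isotropic subspace of `V`). -/
theorem stmt15 (k : Type*) [Field k] (V : Type*) [AddCommGroup V] [Module k V]
    [FiniteDimensional k V] (E : V →ₗ[k] V) (hE : IsNilpotent E)
    (heven : ∀ a : ℕ, Odd a →
      Module.finrank k (LinearMap.range (E ^ (a - 1))) +
          Module.finrank k (LinearMap.range (E ^ (a + 1))) =
        2 * Module.finrank k (LinearMap.range (E ^ a))) :
    2 * Module.finrank k
        (⨆ n : ℕ, Submodule.map (E ^ n) (LinearMap.ker (E ^ (2 * n))) : Submodule k V) =
      Module.finrank k V ∧
    ∀ B : LinearMap.BilinForm k V,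
      (∀ u v : V, B u v = B v u) →
      (∀ v : V, (∀ u : V, B u v = 0) → v = 0) →
      (∀ u v : V, B (E u) v + B u (E v) = 0) →
      ∀ u ∈ (⨆ n : ℕ, Submodule.map (E ^ n) (LinearMap.ker (E ^ (2 * n))) : Submodule k V),
        ∀ v ∈ (⨆ n : ℕ, Submodule.map (E ^ n) (LinearMap.ker (E ^ (2 * n))) : Submodule k V),
          B u v = 0 := by
  classical
  set S : ℕ → Submodule k V :=
    fun n => Submodule.map (E ^ n) (LinearMap.ker (E ^ (2 * n))) with hSdef
  set ρ : ℕ → ℕ := fun m => Module.finrank k (LinearMap.range (E ^ m)) with hρdef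
  obtain ⟨M0, hM0⟩ := hE
  set M := M0 + 1 with hMdef
  have hMnil : E ^ M = 0 := by rw [hMdef, pow_succ, hM0, zero_mul]
  have hnil : ∀ n, M ≤ n → E ^ n = 0 := fun n hn => pow_eq_zero_of_le hn hMnil
  have hS : ∀ n, S n = LinearMap.ker (E ^ n) ⊓ LinearMap.range (E ^ n) := by
    intro n
    simp only [hSdef]
    rw [two_mul]
    exact aux_map_ker E n n
  set F : ℕ → Submodule k V := fun j => (Finset.range j).sup S with hFdef
  have hFsucc : ∀ j, F (j + 1) = S j ⊔ F j := by
    intro j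
    simp only [hFdef, Finset.range_add_one, Finset.sup_insert]
  have hFle_ker : ∀ j, F (j + 1) ≤ LinearMap.ker (E ^ j) := by
    intro j
    simp only [hFdef]
    apply Finset.sup_le
    intro m hm
    rw [Finset.mem_range] at hm
    rw [hS m]
    exact le_trans inf_le_left (aux_ker_mono E (by omega))
  have hSle_F : ∀ m j, m < j → S m ≤ F j := by
    intro m j h
    simp only [hFdef]
    exact Finset.le_sup (Finset.mem_range.mpr h)
  have hinf : ∀ j, S (j + 1) ⊓ F (j + 1) =
      LinearMap.ker (E ^ j) ⊓ LinearMap.range (E ^ (j + 1)) := by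
    intro j
    apply le_antisymm
    · exact le_inf (le_trans inf_le_right (hFle_ker j))
        (le_trans inf_le_left (by rw [hS]; exact inf_le_right))
    · apply le_inf
      · rw [hS]
        exact inf_le_inf (aux_ker_mono E (Nat.le_succ j)) le_rfl
      · refine le_trans ?_ (hSle_F j (j + 1) (Nat.lt_succ_self j))
        rw [hS]
        exact inf_le_inf le_rfl (aux_range_anti E (Nat.le_succ j))
  have rS : ∀ n, Module.finrank k (S n) + ρ (n + n) = ρ n := by
    intro n
    have h := aux_rank E n n
    have hSn : S n = Submodule.map (E ^ n) (LinearMap.ker (E ^ (n + n))) := by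
      simp only [hSdef]
      rw [two_mul]
    rw [hSn]
    exact h
  have rT : ∀ j, Module.finrank k
      ((LinearMap.ker (E ^ j) ⊓ LinearMap.range (E ^ (j + 1)) : Submodule k V)) +
      ρ (j + (j + 1)) = ρ (j + 1) := by
    intro j
    have h := aux_rank E j (j + 1)
    rw [aux_map_ker E j (j + 1)] at h
    exact h
  have key : ∀ j, 2 * Module.finrank k (F (j + 1)) + ρ (2 * j) = ρ 0 := by
    intro j
    induction j with
    | zero =>
      have hS0 : S 0 = ⊥ := by
        rw [hS 0]
        simp [Module.End.one_eq_id, LinearMap.ker_id]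
      have hF1 : F 1 = ⊥ := by
        rw [hFsucc 0, hS0]
        simp [hFdef]
      rw [hF1]
      norm_num
    | succ j ih =>
      have e0 : F (j + 1 + 1) = S (j + 1) ⊔ F (j + 1) := hFsucc (j + 1)
      have e1 : Module.finrank k ((S (j + 1) ⊔ F (j + 1) : Submodule k V)) +
          Module.finrank k ((S (j + 1) ⊓ F (j + 1) : Submodule k V)) =
          Module.finrank k (S (j + 1)) + Module.finrank k (F (j + 1)) :=
        Submodule.finrank_sup_add_finrank_inf_eq _ _
      rw [hinf j] at e1
      have e2 := rS (j + 1)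
      rw [show j + 1 + (j + 1) = 2 * j + 2 from by omega] at e2
      have e3 := rT j
      rw [show j + (j + 1) = 2 * j + 1 from by omega] at e3
      have e4 := heven (2 * j + 1) ⟨j, by ring⟩
      simp only [hρdef] at *
      rw [show 2 * j + 1 - 1 = 2 * j from by omega] at e4
      rw [show 2 * j + 1 + 1 = 2 * j + 2 from by omega] at e4
      rw [show 2 * (j + 1) = 2 * j + 2 from by omega]
      rw [e0]
      omega
  have hLF : (⨆ n, S n) = F (M + 1) := by
    apply le_antisymm
    · apply iSup_le
      intro n
      by_cases hn : n ≤ M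
      · exact hSle_F n (M + 1) (by omega)
      · have hEn : E ^ n = 0 := hnil n (by omega)
        rw [hS n, hEn]
        simp
    · simp only [hFdef]
      exact Finset.sup_le fun n _ => le_iSup S n
  have h2M : ρ (2 * M) = 0 := by
    have hEn : E ^ (2 * M) = 0 := hnil _ (by omega)
    simp only [hρdef]
    rw [hEn]
    simp
  have hρ0 : ρ 0 = Module.finrank k V := by
    simp only [hρdef]
    rw [pow_zero]
    rw [Module.End.one_eq_id, LinearMap.range_id]
    exact finrank_top k V
  constructor
  · rw [hLF]
    have hk := key M
    omega
  · intro B hsymm _hnd hB u hu v hv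
    have half : ∀ (m : ℕ) (x : V), (E ^ (2 * m)) x = 0 → ∀ (n : ℕ) (y : V),
        (E ^ (2 * n)) y = 0 → m ≤ n → B ((E ^ m) x) ((E ^ n) y) = 0 := by
      intro m x hx n y hy hmn
      rw [aux_sign E B hB n ((E ^ m) x) y]
      have hz : (E ^ n) ((E ^ m) x) = 0 := by
        have hexp : n + m = (n - m) + 2 * m := by omega
        calc (E ^ n) ((E ^ m) x) = (E ^ ((n - m) + 2 * m)) x := by
              rw [← Module.End.mul_apply, ← pow_add, hexp]
          _ = (E ^ (n - m)) ((E ^ (2 * m)) x) := by rw [pow_add, Module.End.mul_apply]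
          _ = 0 := by rw [hx, map_zero]
      rw [hz]
      simp
    have core : ∀ (m : ℕ) (x : V), (E ^ (2 * m)) x = 0 → ∀ (n : ℕ) (y : V),
        (E ^ (2 * n)) y = 0 → B ((E ^ m) x) ((E ^ n) y) = 0 := by
      intro m x hx n y hy
      rcases le_total m n with h | h
      · exact half m x hx n y hy h
      · rw [hsymm]
        exact half n y hy m x hx h
    induction hu using Submodule.iSup_induction' with
    | mem i x hx =>
      change x ∈ Submodule.map (E ^ i) (LinearMap.ker (E ^ (2 * i))) at hx
      obtain ⟨x', hx', rfl⟩ := hx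
      simp only [SetLike.mem_coe, LinearMap.mem_ker] at hx'
      induction hv using Submodule.iSup_induction' with
      | mem i' y hy =>
        change y ∈ Submodule.map (E ^ i') (LinearMap.ker (E ^ (2 * i'))) at hy
        obtain ⟨y', hy', rfl⟩ := hy
        simp only [SetLike.mem_coe, LinearMap.mem_ker] at hy'
        exact core i x' hx' i' y' hy'
      | zero => simp
      | add y z hy hz ihy ihz => rw [map_add, ihy, ihz, add_zero]
    | zero => simp
    | add x y hx hy ihx ihy => rw [LinearMap.map_add, LinearMap.add_apply, ihx, ihy, add_zero]
end
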